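/- Let M be an m×n real matrix with nonnegative entries and let PG be its primary bipartite graph. If every cycle of length at least 8 in PG has a chord, then the matrix M Mᵀ has a chordal sparsity pattern. -/

import Mathlib

open Matrix

section Aux

variable {V : Type*} {G : SimpleGraph V}

lemma walk_support_eq_map {u v : V} (p : G.Walk u v) :
    p.support = (List.range (p.length+1)).map p.getVert := by
  induction p with
  | nil => rfl
  | cons h q ih =>
    rw [SimpleGraph.Walk.support_cons, SimpleGraph.Walk.length_cons, List.range_succ_eq_map,
      List.map_cons, ih, List.map_map]
    rfl

lemma walk_edges_eq_map {u v : V} (p : G.Walk u v) :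
    p.edges = (List.range p.length).map (fun i => s(p.getVert i, p.getVert (i+1))) := by
  induction p with
  | nil => simp
  | cons h q ih =>
    rw [SimpleGraph.Walk.edges_cons, SimpleGraph.Walk.length_cons, List.range_succ_eq_map,
      List.map_cons, ih, List.map_map]
    congr 1
    simp [SimpleGraph.Walk.getVert_cons_succ, SimpleGraph.Walk.getVert_zero]

lemma mod_shift {a d k : ℕ} (h : (a + d) % k = a) (ha : a < k) (hd0 : 0 < d) (hdk : d < k) :
    False := by
  rcases Nat.lt_or_ge (a + d) k with h1 | h1
  · rw [Nat.mod_eq_of_lt h1] at h; omega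
  · rw [Nat.mod_eq_sub_mod h1, Nat.mod_eq_of_lt (by omega)] at h; omega

end Aux

/-- A cycle `w` (a closed walk) in a simple graph `G` has a chord if there is an edge of `G`
joining two vertices of the cycle that is not one of the edges of the cycle (equivalently, for a
cycle, the two vertices are not consecutive on the cycle). -/
def SimpleGraph.Walk.HasChord {V : Type*} {G : SimpleGraph V} {v : V} (w : G.Walk v v) : Prop :=
  ∃ x y : V, x ∈ w.support ∧ y ∈ w.support ∧ G.Adj x y ∧ s(x, y) ∉ w.edges

/-- A simple graph is chordal if every cycle of length at least 4 has a chord. -/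
def SimpleGraph.IsChordalGraph {V : Type*} (G : SimpleGraph V) : Prop :=
  ∀ ⦃v : V⦄ (w : G.Walk v v), w.IsCycle → 4 ≤ w.length → w.HasChord

/-- The primary bipartite graph of an `m × n` matrix `M`: vertices `Fin m ⊕ Fin n`, with an edge
between left vertex `i` and right vertex `j` iff `M i j ≠ 0`, and no edges within a part. -/
def primaryGraph {m n : ℕ} (M : Matrix (Fin m) (Fin n) ℝ) : SimpleGraph (Fin m ⊕ Fin n) :=
  SimpleGraph.fromRel (fun a b => ∃ i j, a = Sum.inl i ∧ b = Sum.inr j ∧ M i j ≠ 0)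

/-- The sparsity-pattern graph of a square matrix `B`: distinct `i`, `i'` are adjacent
whenever `B i i' ≠ 0`. -/
def sparsityGraph {k : ℕ} (B : Matrix (Fin k) (Fin k) ℝ) : SimpleGraph (Fin k) :=
  SimpleGraph.fromRel (fun i i' => B i i' ≠ 0)

lemma adjP_iff {m n : ℕ} (M : Matrix (Fin m) (Fin n) ℝ) (i : Fin m) (j : Fin n) :
    (primaryGraph M).Adj (Sum.inl i) (Sum.inr j) ↔ M i j ≠ 0 := by
  simp only [primaryGraph, SimpleGraph.fromRel_adj]
  constructor
  · rintro ⟨-, ⟨i', j', h1, h2, h3⟩ | ⟨i', j', h1, h2, h3⟩⟩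
    · cases h1; cases h2; exact h3
    · cases h1
  · intro h
    exact ⟨by simp, Or.inl ⟨i, j, rfl, rfl, h⟩⟩

lemma adjP_cases {m n : ℕ} (M : Matrix (Fin m) (Fin n) ℝ) {a b : Fin m ⊕ Fin n}
    (h : (primaryGraph M).Adj a b) :
    (∃ i j, a = Sum.inl i ∧ b = Sum.inr j ∧ M i j ≠ 0) ∨
    (∃ i j, b = Sum.inl i ∧ a = Sum.inr j ∧ M i j ≠ 0) := by
  simpa only [primaryGraph, SimpleGraph.fromRel_adj] using h.2

lemma adjG_iff {m n : ℕ} (M : Matrix (Fin m) (Fin n) ℝ) (hM : ∀ i j, 0 ≤ M i j)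
    (i i' : Fin m) :
    (sparsityGraph (M * Mᵀ)).Adj i i' ↔ i ≠ i' ∧ ∃ j, M i j ≠ 0 ∧ M i' j ≠ 0 := by
  have key : ∀ a b : Fin m, ((M * Mᵀ) a b ≠ 0) ↔ ∃ j, M a j ≠ 0 ∧ M b j ≠ 0 := by
    intro a b
    rw [Matrix.mul_apply]
    rw [← not_iff_not]
    push_neg
    simp only [Matrix.transpose_apply]
    rw [Finset.sum_eq_zero_iff_of_nonneg (fun j _ => mul_nonneg (hM a j) (hM b j))]
    constructor
    · intro h j h1
      have := h j (Finset.mem_univ j)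
      rcases mul_eq_zero.mp this with h2 | h2
      · exact absurd h2 h1
      · exact h2
    · intro h j _
      by_cases h1 : M a j = 0
      · simp [h1]
      · simp [h j h1]
  simp only [sparsityGraph, SimpleGraph.fromRel_adj, key]
  constructor
  · rintro ⟨h1, h2 | h2⟩
    · exact ⟨h1, h2⟩
    · exact ⟨h1, h2.imp fun j hj => ⟨hj.2, hj.1⟩⟩
  · rintro ⟨h1, h2⟩
    exact ⟨h1, Or.inl h2⟩

/-- If every cycle of length at least 8 in the primary bipartite graph of a nonnegative matrix
`M` has a chord, then `M * Mᵀ` has a chordal sparsity pattern. -/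
theorem mul_transpose_chordal {m n : ℕ} (M : Matrix (Fin m) (Fin n) ℝ)
    (hM : ∀ i j, 0 ≤ M i j)
    (hchord : ∀ (v : Fin m ⊕ Fin n) (w : (primaryGraph M).Walk v v),
      w.IsCycle → 8 ≤ w.length → w.HasChord) :
    (sparsityGraph (M * Mᵀ)).IsChordalGraph := by
  intro v w hcyc hlen4
  by_contra hnc
  rw [SimpleGraph.Walk.HasChord] at hnc
  push_neg at hnc
  set k := w.length with hk
  have hk0 : 0 < k := by omega
  set c : ℕ → Fin m := fun t => w.getVert (t % k) with hc
  have hcmod : ∀ t, c t = c (t % k) := by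
    intro t
    simp only [hc]
    rw [Nat.mod_mod_of_dvd t (dvd_refl k)]
  have hgv : ∀ i, i ≤ k → w.getVert i = c i := by
    intro i hi
    rcases eq_or_lt_of_le hi with rfl | h
    · show w.getVert k = w.getVert (k % k)
      rw [Nat.mod_self, SimpleGraph.Walk.getVert_zero]
      show w.getVert w.length = v
      exact w.getVert_length
    · simp only [hc, Nat.mod_eq_of_lt h]
  have hc0 : c 0 = v := by
    simp only [hc, Nat.zero_mod]
    exact w.getVert_zero
  have hsupp : ∀ t, c t ∈ w.support := by
    intro t
    rw [SimpleGraph.Walk.mem_support_iff_exists_getVert]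
    exact ⟨t % k, rfl, le_of_lt (Nat.mod_lt _ hk0)⟩
  -- injectivity of c on [0, k)
  have hnodup : (List.map (fun i => w.getVert (i+1)) (List.range k)).Nodup := by
    have h1 := hcyc.support_nodup
    rw [walk_support_eq_map, List.range_succ_eq_map, List.map_cons, List.map_map,
      List.tail_cons] at h1
    convert h1 using 2
    rfl
  have cinj : ∀ a b, a < k → b < k → c a = c b → a = b := by
    intro a b ha hb hab
    have hinj := List.inj_on_of_nodup_map hnodup
    have hga : w.getVert a = w.getVert b := by
      rw [hgv a ha.le, hgv b hb.le]; exact hab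
    have hvk : w.getVert k = v := by
      show w.getVert w.length = v
      exact w.getVert_length
    rcases Nat.eq_zero_or_pos a with rfl | ha1
    · rcases Nat.eq_zero_or_pos b with rfl | hb1
      · rfl
      · exfalso
        have heq : w.getVert ((b-1)+1) = w.getVert ((k-1)+1) := by
          rw [show b - 1 + 1 = b by omega, show k - 1 + 1 = k by omega, hvk]
          exact hga.symm.trans w.getVert_zero
        have := hinj (List.mem_range.mpr (by omega : b - 1 < k))
          (List.mem_range.mpr (by omega : k - 1 < k)) heq
        omega
    · rcases Nat.eq_zero_or_pos b with rfl | hb1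
      · exfalso
        have heq : w.getVert ((a-1)+1) = w.getVert ((k-1)+1) := by
          rw [show a - 1 + 1 = a by omega, show k - 1 + 1 = k by omega, hvk]
          exact hga.trans w.getVert_zero
        have := hinj (List.mem_range.mpr (by omega : a - 1 < k))
          (List.mem_range.mpr (by omega : k - 1 < k)) heq
        omega
      · have heq : w.getVert ((a-1)+1) = w.getVert ((b-1)+1) := by
          rw [show a - 1 + 1 = a by omega, show b - 1 + 1 = b by omega]
          exact hga
        have := hinj (List.mem_range.mpr (by omega : a - 1 < k))
          (List.mem_range.mpr (by omega : b - 1 < k)) heq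
        omega
  -- edge characterization of the cycle
  have hedgechar : ∀ e, e ∈ w.edges ↔ ∃ i, i < k ∧ s(c i, c (i+1)) = e := by
    intro e
    rw [walk_edges_eq_map, List.mem_map]
    constructor
    · rintro ⟨i, hi, rfl⟩
      rw [List.mem_range] at hi
      refine ⟨i, hi, ?_⟩
      rw [hgv i hi.le, hgv (i+1) hi]
    · rintro ⟨i, hi, rfl⟩
      refine ⟨i, List.mem_range.mpr hi, ?_⟩
      rw [hgv i hi.le, hgv (i+1) hi]
  have hconsec : ∀ t s, t < k → s < k → s(c t, c s) ∈ w.edges →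
      s = (t+1) % k ∨ t = (s+1) % k := by
    intro t s ht hs he
    obtain ⟨i, hi, hie⟩ := (hedgechar _).mp he
    have hi1 : (i+1) % k < k := Nat.mod_lt _ hk0
    have hci1 : c (i+1) = c ((i+1) % k) := hcmod (i+1)
    rw [Sym2.eq_iff] at hie
    rcases hie with ⟨h1, h2⟩ | ⟨h1, h2⟩
    · left
      have hit : i = t := cinj i t hi ht h1
      have h5 : (i+1) % k = s := cinj _ s hi1 hs (by rw [← hci1]; exact h2)
      subst hit
      exact h5.symm
    · right
      have his : i = s := cinj i s hi hs h1
      have h5 : (i+1) % k = t := cinj _ t hi1 ht (by rw [← hci1]; exact h2)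
      subst his
      exact h5.symm
  -- sharing a column forces consecutiveness
  have hshare : ∀ a b, a < k → b < k → c a ≠ c b →
      (∃ j, M (c a) j ≠ 0 ∧ M (c b) j ≠ 0) → b = (a+1) % k ∨ a = (b+1) % k := by
    intro a b ha hb hne hex
    have hadj : (sparsityGraph (M * Mᵀ)).Adj (c a) (c b) := (adjG_iff M hM _ _).mpr ⟨hne, hex⟩
    exact hconsec a b ha hb (hnc _ _ (hsupp a) (hsupp b) hadj)
  -- the shared columns J
  have hJex : ∀ t, t < k → ∃ j, M (c t) j ≠ 0 ∧ M (c (t+1)) j ≠ 0 := by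
    intro t ht
    have h1 := w.adj_getVert_succ (show t < w.length from ht)
    rw [hgv t ht.le, hgv (t+1) ht] at h1
    exact ((adjG_iff M hM _ _).mp h1).2
  have hn0 : 0 < n := by
    obtain ⟨j, -, -⟩ := hJex 0 hk0
    exact Nat.pos_of_ne_zero (fun h => (h ▸ j).elim0)
  set J : ℕ → Fin n := fun t => if h : t < k then (hJex t h).choose else ⟨0, hn0⟩ with hJ
  have hJ1 : ∀ t, t < k → M (c t) (J t) ≠ 0 := by
    intro t ht
    simp only [hJ, dif_pos ht]
    exact (hJex t ht).choose_spec.1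
  have hJ2 : ∀ t, t < k → M (c (t+1)) (J t) ≠ 0 := by
    intro t ht
    simp only [hJ, dif_pos ht]
    exact (hJex t ht).choose_spec.2
  -- the shared columns are pairwise distinct
  have haux : ∀ t s, t < k → s < k → J t = J s → s = (t+1) % k → False := by
    intro t s ht hs hJts hst
    have hs1 : (s+1) % k < k := Nat.mod_lt _ hk0
    have h1 : M (c t) (J t) ≠ 0 := hJ1 t ht
    have h2 : M (c (s+1)) (J t) ≠ 0 := by rw [hJts]; exact hJ2 s hs
    by_cases hceq : c t = c (s+1)
    · have hts : t = (s+1) % k := cinj t _ ht hs1 (by rw [hceq, hcmod])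
      have h3 : t = ((t+1) % k + 1) % k := by rw [← hst, ← hts]
      have h4 : t = ((t+1) % k + 1) % k := h3
      rw [Nat.mod_add_mod] at h4
      have h5 : (t+2) % k = t := by
        rw [show t + 2 = t + 1 + 1 by omega]
        exact h4.symm
      exact mod_shift h5 ht (by omega) (by omega)
    · have hcc : c t ≠ c ((s+1) % k) := by rw [← hcmod]; exact hceq
      have hex : ∃ j, M (c t) j ≠ 0 ∧ M (c ((s+1) % k)) j ≠ 0 :=
        ⟨J t, h1, by rw [← hcmod]; exact h2⟩
      rcases hshare t ((s+1) % k) ht hs1 hcc hex with h | h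
      · rw [← hst] at h
        exact mod_shift h hs (by omega) (by omega)
      · rw [hst] at h
        rw [Nat.mod_add_mod] at h
        have h4 : t = ((t+1) % k + 2) % k := h
        rw [Nat.mod_add_mod] at h4
        have h5 : (t+3) % k = t := by
          rw [show t + 3 = t + 1 + 2 by omega]
          exact h4.symm
        exact mod_shift h5 ht (by omega) (by omega)
  have hJinj : ∀ t s, t < k → s < k → J t = J s → t = s := by
    intro t s ht hs hJts
    by_contra hne
    have hcne : c t ≠ c s := fun h => hne (cinj t s ht hs h)
    rcases hshare t s ht hs hcne ⟨J t, hJ1 t ht, by rw [hJts]; exact hJ1 s hs⟩ with h | h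
    · exact haux t s ht hs hJts h
    · exact haux s t hs ht hJts.symm h
  -- adjacencies in the primary graph
  have hPadj1 : ∀ t, t < k → (primaryGraph M).Adj (Sum.inl (c t)) (Sum.inr (J t)) :=
    fun t ht => (adjP_iff M _ _).mpr (hJ1 t ht)
  have hPadj2 : ∀ t, t < k → (primaryGraph M).Adj (Sum.inr (J t)) (Sum.inl (c (t+1))) :=
    fun t ht => ((adjP_iff M _ _).mpr (hJ2 t ht)).symm
  -- the lifted path
  have claim : ∀ r t, t + r = k → 1 ≤ t →
      ∃ p : (primaryGraph M).Walk (Sum.inl (c t)) (Sum.inl (c k)),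
        p.length = 2 * r ∧
        (∀ x, x ∈ p.support ↔ ∃ s, t ≤ s ∧ s ≤ k ∧
          (x = Sum.inl (c s) ∨ (s < k ∧ x = Sum.inr (J s)))) ∧
        (∀ e, e ∈ p.edges ↔ ∃ s, t ≤ s ∧ s < k ∧
          (e = s(Sum.inl (c s), Sum.inr (J s)) ∨ e = s(Sum.inr (J s), Sum.inl (c (s+1))))) ∧
        p.IsPath := by
    intro r
    induction r with
    | zero =>
      intro t htr ht1
      have : t = k := by omega
      subst this
      refine ⟨SimpleGraph.Walk.nil, by simp, ?_, ?_, SimpleGraph.Walk.IsPath.nil⟩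
      · intro x
        simp only [SimpleGraph.Walk.support_nil, List.mem_singleton]
        constructor
        · rintro rfl; exact ⟨k, le_rfl, le_rfl, Or.inl rfl⟩
        · rintro ⟨s, hs1, hs2, hx | ⟨hs3, hx⟩⟩
          · have : s = k := le_antisymm hs2 hs1
            subst this; exact hx
          · omega
      · intro e
        simp only [SimpleGraph.Walk.edges_nil, List.not_mem_nil, false_iff]
        rintro ⟨s, hs1, hs2, -⟩
        omega
    | succ r ih =>
      intro t htr ht1
      have ht : t < k := by omega
      obtain ⟨p', hlen', hsupp', hedge', hpath'⟩ := ih (t+1) (by omega) (by omega)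
      refine ⟨SimpleGraph.Walk.cons (hPadj1 t ht) (SimpleGraph.Walk.cons (hPadj2 t ht) p'),
        ?_, ?_, ?_, ?_⟩
      · simp [hlen']; omega
      · intro x
        simp only [SimpleGraph.Walk.support_cons, List.mem_cons, hsupp' x]
        constructor
        · rintro (rfl | rfl | ⟨s, hs1, hs2, hx⟩)
          · exact ⟨t, le_rfl, ht.le, Or.inl rfl⟩
          · exact ⟨t, le_rfl, ht.le, Or.inr ⟨ht, rfl⟩⟩
          · exact ⟨s, by omega, hs2, hx⟩
        · rintro ⟨s, hs1, hs2, hx⟩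
          rcases eq_or_lt_of_le hs1 with rfl | hlt
          · rcases hx with rfl | ⟨-, rfl⟩
            · exact Or.inl rfl
            · exact Or.inr (Or.inl rfl)
          · exact Or.inr (Or.inr ⟨s, by omega, hs2, hx⟩)
      · intro e
        simp only [SimpleGraph.Walk.edges_cons, List.mem_cons, hedge' e]
        constructor
        · rintro (rfl | rfl | ⟨s, hs1, hs2, hx⟩)
          · exact ⟨t, le_rfl, ht, Or.inl rfl⟩
          · exact ⟨t, le_rfl, ht, Or.inr rfl⟩
          · exact ⟨s, by omega, hs2, hx⟩
        · rintro ⟨s, hs1, hs2, hx⟩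
          rcases eq_or_lt_of_le hs1 with rfl | hlt
          · rcases hx with rfl | rfl
            · exact Or.inl rfl
            · exact Or.inr (Or.inl rfl)
          · exact Or.inr (Or.inr ⟨s, by omega, hs2, hx⟩)
      · rw [SimpleGraph.Walk.cons_isPath_iff, SimpleGraph.Walk.cons_isPath_iff]
        refine ⟨⟨hpath', ?_⟩, ?_⟩
        · intro hmem
          obtain ⟨s, hs1, hs2, hx | ⟨hs3, hx⟩⟩ := (hsupp' _).mp hmem
          · exact absurd hx (by simp)
          · have : J t = J s := Sum.inr.inj hx
            have := hJinj t s ht hs3 this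
            omega
        · intro hmem
          rw [SimpleGraph.Walk.support_cons, List.mem_cons] at hmem
          rcases hmem with hx | hmem
          · exact absurd hx (by simp)
          · obtain ⟨s, hs1, hs2, hx | ⟨hs3, hx⟩⟩ := (hsupp' _).mp hmem
            · have hcs : c t = c s := Sum.inl.inj hx
              rcases eq_or_lt_of_le hs2 with rfl | hsk
              · have : c t = c 0 := by rw [hcs, hcmod, Nat.mod_self]
                have := cinj t 0 ht hk0 this
                omega
              · have := cinj t s ht hsk hcs
                omega
            · exact absurd hx (by simp)
  obtain ⟨p1, hlen1, hsupp1, hedge1, hpath1⟩ := claim (k-1) 1 (by omega) le_rfl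
  have hck : c k = c 0 := by rw [hcmod k, Nat.mod_self]
  have hckv : c k = v := by rw [hck, hc0]
  have hadj0 : (primaryGraph M).Adj (Sum.inl v) (Sum.inr (J 0)) := by
    rw [← hc0]; exact hPadj1 0 hk0
  set q : (primaryGraph M).Walk (Sum.inr (J 0)) (Sum.inl (c k)) :=
    SimpleGraph.Walk.cons (hPadj2 0 hk0) p1 with hq
  set W : (primaryGraph M).Walk (Sum.inl v) (Sum.inl v) :=
    SimpleGraph.Walk.cons hadj0 (q.copy rfl (congrArg Sum.inl hckv)) with hW
  have hqsupp : q.support = Sum.inr (J 0) :: p1.support := by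
    rw [hq, SimpleGraph.Walk.support_cons]
  have hqedges : q.edges = s(Sum.inr (J 0), Sum.inl (c 1)) :: p1.edges := by
    rw [hq, SimpleGraph.Walk.edges_cons]
  have hWsupp : ∀ x, x ∈ W.support ↔ ∃ s, s < k ∧ (x = Sum.inl (c s) ∨ x = Sum.inr (J s)) := by
    intro x
    rw [hW, SimpleGraph.Walk.support_cons, SimpleGraph.Walk.support_copy, hqsupp]
    simp only [List.mem_cons]
    constructor
    · rintro (rfl | rfl | hmem)
      · exact ⟨0, hk0, Or.inl (by rw [hc0])⟩
      · exact ⟨0, hk0, Or.inr rfl⟩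
      · obtain ⟨s, hs1, hs2, hx | ⟨hs3, hx⟩⟩ := (hsupp1 _).mp hmem
        · rcases eq_or_lt_of_le hs2 with rfl | hsk
          · exact ⟨0, hk0, Or.inl (by rw [hx, hck])⟩
          · exact ⟨s, hsk, Or.inl hx⟩
        · exact ⟨s, hs3, Or.inr hx⟩
    · rintro ⟨s, hs, rfl | rfl⟩
      · rcases Nat.eq_zero_or_pos s with rfl | hs1
        · exact Or.inl (by rw [hc0])
        · exact Or.inr (Or.inr ((hsupp1 _).mpr ⟨s, hs1, hs.le, Or.inl rfl⟩))
      · rcases Nat.eq_zero_or_pos s with rfl | hs1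
        · exact Or.inr (Or.inl rfl)
        · exact Or.inr (Or.inr ((hsupp1 _).mpr ⟨s, hs1, hs.le, Or.inr ⟨hs, rfl⟩⟩))
  have hWedge : ∀ e, e ∈ W.edges ↔ ∃ s, s < k ∧
      (e = s(Sum.inl (c s), Sum.inr (J s)) ∨ e = s(Sum.inr (J s), Sum.inl (c (s+1)))) := by
    intro e
    rw [hW, SimpleGraph.Walk.edges_cons, SimpleGraph.Walk.edges_copy, hqedges]
    simp only [List.mem_cons]
    constructor
    · rintro (rfl | rfl | hmem)
      · exact ⟨0, hk0, Or.inl (by rw [hc0])⟩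
      · exact ⟨0, hk0, Or.inr rfl⟩
      · obtain ⟨s, hs1, hs2, hx⟩ := (hedge1 _).mp hmem
        exact ⟨s, hs2, hx⟩
    · rintro ⟨s, hs, rfl | rfl⟩
      · rcases Nat.eq_zero_or_pos s with rfl | hs1
        · exact Or.inl (by rw [hc0])
        · exact Or.inr (Or.inr ((hedge1 _).mpr ⟨s, hs1, hs, Or.inl rfl⟩))
      · rcases Nat.eq_zero_or_pos s with rfl | hs1
        · exact Or.inr (Or.inl rfl)
        · exact Or.inr (Or.inr ((hedge1 _).mpr ⟨s, hs1, hs, Or.inr rfl⟩))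
  have hWlen : W.length = 2 * k := by
    rw [hW]
    simp only [SimpleGraph.Walk.length_cons, SimpleGraph.Walk.length_copy, hq,
      SimpleGraph.Walk.length_cons, hlen1]
    omega
  have hWcyc : W.IsCycle := by
    rw [hW, SimpleGraph.Walk.cons_isCycle_iff]
    constructor
    · rw [SimpleGraph.Walk.isPath_copy, hq, SimpleGraph.Walk.cons_isPath_iff]
      refine ⟨hpath1, ?_⟩
      intro hmem
      obtain ⟨s, hs1, hs2, hx | ⟨hs3, hx⟩⟩ := (hsupp1 _).mp hmem
      · exact absurd hx (by simp)
      · have := hJinj 0 s hk0 hs3 (Sum.inr.inj hx)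
        omega
    · rw [SimpleGraph.Walk.edges_copy, hqedges]
      simp only [List.mem_cons, not_or]
      refine ⟨?_, ?_⟩
      · rw [Sym2.eq_iff]
        rintro (⟨h1, -⟩ | ⟨h1, -⟩)
        · exact absurd h1 (by simp)
        · have : v = c 1 := Sum.inl.inj h1
          have : (0 : ℕ) = 1 := cinj 0 1 hk0 (by omega) (by rw [hc0]; exact this)
          omega
      · intro hmem
        obtain ⟨s, hs1, hs2, hx⟩ := (hedge1 _).mp hmem
        rcases hx with hx | hx
        · rw [Sym2.eq_iff] at hx
          rcases hx with ⟨h1, h2⟩ | ⟨h1, h2⟩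
          · have := hJinj 0 s hk0 hs2 (Sum.inr.inj h2)
            omega
          · exact absurd h1 (by simp)
        · rw [Sym2.eq_iff] at hx
          rcases hx with ⟨h1, h2⟩ | ⟨h1, h2⟩
          · exact absurd h1 (by simp)
          · have := hJinj 0 s hk0 hs2 (Sum.inr.inj h2)
            omega
  -- the key contradiction: any chord of W yields a chord of w
  have key : ∀ i j, Sum.inl i ∈ W.support → Sum.inr j ∈ W.support → M i j ≠ 0 →
      s(Sum.inl i, Sum.inr j) ∈ W.edges := by
    intro i j hxi hyj hMij
    obtain ⟨t, ht, hxt⟩ := (hWsupp _).mp hxi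
    rcases hxt with hxt | hxt
    swap
    · exact absurd hxt (by simp)
    obtain ⟨s, hs, hys⟩ := (hWsupp _).mp hyj
    rcases hys with hys | hys
    · exact absurd hys (by simp)
    have hit : i = c t := Sum.inl.inj hxt
    have hjs : j = J s := Sum.inr.inj hys
    subst hit hjs
    by_contra hnotedge
    have h1 : c t ≠ c s := by
      intro h
      exact hnotedge ((hWedge _).mpr ⟨s, hs, Or.inl (by rw [h])⟩)
    have h2 : c t ≠ c (s+1) := by
      intro h
      refine hnotedge ((hWedge _).mpr ⟨s, hs, Or.inr ?_⟩)
      rw [h, Sym2.eq_swap]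
    have hs1 : (s+1) % k < k := Nat.mod_lt _ hk0
    rcases hshare t s ht hs h1 ⟨J s, hMij, hJ1 s hs⟩ with h | h
    · -- s = (t+1) % k
      have h3 : c t ≠ c ((s+1) % k) := by rw [← hcmod]; exact h2
      rcases hshare t ((s+1) % k) ht hs1 h3
          ⟨J s, hMij, by rw [← hcmod]; exact hJ2 s hs⟩ with h4 | h4
      · -- h4 : (s+1) % k = (t+1) % k = s
        rw [← h] at h4
        exact mod_shift h4 hs (by omega) (by omega)
      · -- h4 : t = ((s+1) % k + 1) % k
        rw [h] at h4
        rw [Nat.mod_add_mod] at h4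
        have h7 : t = ((t+1) % k + 2) % k := h4
        rw [Nat.mod_add_mod] at h7
        have h5 : (t+3) % k = t := by
          rw [show t + 3 = t + 1 + 2 by omega]
          exact h7.symm
        exact mod_shift h5 ht (by omega) (by omega)
    · -- t = (s+1) % k, contradicts h2
      have : c t = c (s+1) := by rw [h, ← hcmod]
      exact h2 this
  obtain ⟨x, y, hx, hy, hxy, hne⟩ :=
    hchord (Sum.inl v) W hWcyc (by rw [hWlen]; omega)
  rcases adjP_cases M hxy with ⟨i, j, rfl, rfl, hMij⟩ | ⟨i, j, rfl, rfl, hMij⟩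
  · exact hne (key i j hx hy hMij)
  · refine hne ?_
    rw [Sym2.eq_swap]
    exact key i j hy hx hMij
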